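/- Let 0 < α ≤ 1 and let h belong to the class G(α). Then there exists an analytic function φ on the open unit disk 𝔻 with |φ(z)| ≤ 1 for all z ∈ 𝔻 such that h''(z)·(z·φ(z) − 1) = α·φ(z)·h'(z) for all z ∈ 𝔻. -/

import Mathlib

open Complex Metric

/-- The class `G(α)`: analytic functions `h` on the unit disk with `h(0) = 0`, `h'(0) = 1`,
`h'(z) ≠ 0` on the disk, and `Re (z h''(z) / (α h'(z))) < 1/2` on the disk. -/
noncomputable def GClass (α : ℝ) (h : ℂ → ℂ) : Prop :=
  AnalyticOnNhd ℂ h (ball (0:ℂ) 1) ∧ h 0 = 0 ∧ deriv h 0 = 1 ∧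
    (∀ z ∈ ball (0:ℂ) 1, deriv h z ≠ 0) ∧
    ∀ z ∈ ball (0:ℂ) 1, (z * deriv (deriv h) z / ((α : ℂ) * deriv h z)).re < 1/2

lemma half_plane_abs {w : ℂ} (hw : w.re < 1/2) : ‖w‖ < ‖w - 1‖ := by
  have h2 : ‖w‖ ^ 2 < ‖w - 1‖ ^ 2 := by
    simp only [Complex.sq_norm, Complex.normSq_apply, Complex.sub_re, Complex.sub_im,
      Complex.one_re, Complex.one_im]
    nlinarith
  exact lt_of_pow_lt_pow_left₀ 2 (norm_nonneg _) h2

theorem stmt_2 {α : ℝ} (hα0 : 0 < α) (hα1 : α ≤ 1) {h : ℂ → ℂ} (hG : GClass α h) :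
    ∃ φ : ℂ → ℂ, AnalyticOnNhd ℂ φ (ball (0:ℂ) 1) ∧
      (∀ z ∈ ball (0:ℂ) 1, ‖φ z‖ ≤ 1) ∧
      ∀ z ∈ ball (0:ℂ) 1,
        deriv (deriv h) z * (z * φ z - 1) = (α : ℂ) * φ z * deriv h z := by
  obtain ⟨hA, h0, hd0, hne, hre⟩ := hG
  have hA1 : AnalyticOnNhd ℂ (deriv h) (ball (0:ℂ) 1) := hA.deriv
  have hA2 : AnalyticOnNhd ℂ (deriv (deriv h)) (ball (0:ℂ) 1) := hA1.deriv
  set D : ℂ → ℂ := fun z => z * deriv (deriv h) z - (α : ℂ) * deriv h z with hDdef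
  have hb : ∀ z ∈ ball (0:ℂ) 1, (α : ℂ) * deriv h z ≠ 0 := by
    intro z hz
    exact mul_ne_zero (by exact_mod_cast hα0.ne') (hne z hz)
  have hD : ∀ z ∈ ball (0:ℂ) 1, D z ≠ 0 := by
    intro z hz hzero
    have heq : z * deriv (deriv h) z = (α : ℂ) * deriv h z := by
      have := sub_eq_zero.mp hzero; exact this
    have h1 : (z * deriv (deriv h) z / ((α : ℂ) * deriv h z)) = 1 := by
      rw [heq, div_self (hb z hz)]
    have hre' := hre z hz
    rw [h1] at hre'
    norm_num at hre'
  have hDA : AnalyticOnNhd ℂ D (ball (0:ℂ) 1) :=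
    ((analyticOnNhd_id).mul hA2).sub ((analyticOnNhd_const).mul hA1)
  set φ : ℂ → ℂ := fun z => deriv (deriv h) z / D z with hφdef
  have hφA : AnalyticOnNhd ℂ φ (ball (0:ℂ) 1) := hA2.div hDA hD
  -- the key inequality: |z h''| < |D z|
  have hkey : ∀ z ∈ ball (0:ℂ) 1,
      ‖z * deriv (deriv h) z‖ < ‖D z‖ := by
    intro z hz
    have hw := half_plane_abs (hre z hz)
    rw [div_sub_one (hb z hz), norm_div, norm_div,
      div_lt_div_iff_of_pos_right (norm_pos_iff.mpr (hb z hz))] at hw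
    exact hw
  -- g = z * φ z maps ball to ball
  set g : ℂ → ℂ := fun z => z * φ z with hgdef
  have hg0 : g 0 = 0 := by simp [hgdef]
  have hgball : ∀ z ∈ ball (0:ℂ) 1, ‖g z‖ < 1 := by
    intro z hz
    have : g z = z * deriv (deriv h) z / D z := by
      simp only [hgdef, hφdef]; ring
    rw [this, norm_div, div_lt_one (norm_pos_iff.mpr (hD z hz))]
    simpa using hkey z hz
  have hgA : AnalyticOnNhd ℂ g (ball (0:ℂ) 1) := (analyticOnNhd_id).mul hφA
  have hmaps : Set.MapsTo g (ball (0:ℂ) 1) (ball (g 0) 1) := by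
    intro z hz
    rw [hg0, mem_ball, dist_zero_right]
    exact (hgball z hz)
  have hS : ∀ z ∈ ball (0:ℂ) 1, ‖dslope g 0 z‖ ≤ 1 := by
    intro z hz
    have := Complex.norm_dslope_le_div_of_mapsTo_ball hgA.differentiableOn (hmaps.mono_right ball_subset_closedBall) hz
    simpa using this
  refine ⟨φ, hφA, ?_, ?_⟩
  · intro z hz
    rcases eq_or_ne z 0 with rfl | hz0
    · have := hS 0 (by simp)
      rw [dslope_same] at this
      have hder : deriv g 0 = φ 0 := by
        have hφd : HasDerivAt φ (deriv φ 0) 0 :=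
          ((hφA 0 (by simp)).differentiableAt).hasDerivAt
        have : HasDerivAt g (1 * φ 0 + (0:ℂ) * deriv φ 0) 0 :=
          (hasDerivAt_id 0).mul hφd
        simpa using this.deriv
      rw [hder] at this
      simpa using this
    · have := hS z hz
      rw [dslope_of_ne _ hz0, slope_def_field] at this
      have h2 : (g z - g 0) / (z - 0) = φ z := by
        simp only [hgdef, hg0, sub_zero]
        field_simp
        ring
      rw [h2] at this
      simpa using this
  · intro z hz
    have hDz := hD z hz
    simp only [hφdef]
    field_simp
    ring
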